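/- arXiv:1509.04001 — 4 statements merged into one kernel-verified Lean document; each statement's English description precedes it below -/
import Mathlib

section
/- Let Ω ⊂ ℝⁿ be a measurable set, let R > 1, and let h : Ω × (0,R) → [0,∞] be a nonnegative measurable function. For ρ ∈ (0,R], set η(ρ) := ∫_{Ω×(0,ρ)} h(x,y) dx dy (a Lebesgue integral with values in [0,∞]). Then ∫_{Ω×(√R,R)} h(x,y)/y² dx dy ≤ 2 ∫_{√R}^{R} t^{-3} η(t) dt + η(R)/R². -/
open MeasureTheory ENNReal Set

lemma aux1 (y R : ℝ) (h0 : 0 < y) (hyR : y < R) :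
    ∫⁻ t in Ioo y R, ENNReal.ofReal ((t ^ 3)⁻¹)
      = ENNReal.ofReal (((y ^ 2)⁻¹ - (R ^ 2)⁻¹) / 2) := by
  have hint : IntegrableOn (fun t : ℝ => t ^ (-3 : ℤ)) (Ioo y R) := by
    apply (ContinuousOn.integrableOn_Icc ?_).mono_set Ioo_subset_Icc_self
    intro t ht
    exact (continuousAt_zpow₀ _ _ (Or.inl (by nlinarith [ht.1] : t ≠ 0))).continuousWithinAt
  have hnn : 0 ≤ᵐ[volume.restrict (Ioo y R)] fun t : ℝ => t ^ (-3 : ℤ) := by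
    filter_upwards [ae_restrict_mem measurableSet_Ioo] with t ht
    exact zpow_nonneg (by linarith [ht.1]) _
  have key := ofReal_integral_eq_lintegral_ofReal hint hnn
  have hval : ∫ t in Ioo y R, t ^ (-3 : ℤ) = ((y ^ 2)⁻¹ - (R ^ 2)⁻¹) / 2 := by
    rw [← integral_Ioc_eq_integral_Ioo, ← intervalIntegral.integral_of_le hyR.le,
      integral_zpow]
    · norm_num [zpow_neg, zpow_ofNat]
      ring
    · right
      refine ⟨by decide, ?_⟩
      rw [Set.uIcc_of_le hyR.le]
      rintro ⟨h1, h2⟩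
      linarith
  rw [hval] at key
  have heq : ∫⁻ t in Ioo y R, ENNReal.ofReal ((t ^ 3)⁻¹)
      = ∫⁻ x in Ioo y R, ENNReal.ofReal (x ^ (-3 : ℤ)) :=
    lintegral_congr fun t => by rw [zpow_neg, show ((3:ℤ):ℤ)=((3:ℕ):ℤ) from rfl, zpow_natCast]
  rw [heq, ← key]

/-- Lemma 2.4 (herein): for a nonnegative measurable `h` on `Ω × (0,R)` and
`η(ρ) = ∫_{Ω×(0,ρ)} h`, one has
`∫_{Ω×(√R,R)} h(X)/y² dX ≤ 2 ∫_{√R}^R t⁻³ η(t) dt + η(R)/R²`. -/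
theorem stmt_4 (n : ℕ) (Ω : Set (EuclideanSpace ℝ (Fin n))) (hΩ : MeasurableSet Ω)
    (R : ℝ) (hR : 1 < R)
    (h : EuclideanSpace ℝ (Fin n) × ℝ → ℝ≥0∞) (hh : Measurable h)
    (η : ℝ → ℝ≥0∞) (hη : ∀ ρ : ℝ, η ρ = ∫⁻ p in Ω ×ˢ Set.Ioo (0 : ℝ) ρ, h p) :
    ∫⁻ p in Ω ×ˢ Set.Ioo (Real.sqrt R) R, h p / ENNReal.ofReal (p.2 ^ 2)
      ≤ 2 * (∫⁻ t in Set.Ioo (Real.sqrt R) R, η t / ENNReal.ofReal (t ^ 3))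
        + η R / ENNReal.ofReal (R ^ 2) := by
  set s : ℝ := Real.sqrt R with hs_def
  have hR0 : (0:ℝ) < R := by linarith
  have hs1 : 1 < s := by
    rw [hs_def, show (1:ℝ) = Real.sqrt 1 from (Real.sqrt_one).symm]
    exact Real.sqrt_lt_sqrt (by norm_num) hR
  have hs0 : 0 < s := by linarith
  have hsR : s < R := (Real.sqrt_lt' hR0).mpr (by nlinarith)
  set S : Set (EuclideanSpace ℝ (Fin n) × ℝ) := Ω ×ˢ Set.Ioo s R with hS_def
  have hSm : MeasurableSet S := hΩ.prod measurableSet_Ioo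
  -- measurability of η
  have hηmono : Monotone η := by
    intro a b hab
    rw [hη a, hη b]
    exact lintegral_mono_set (Set.prod_mono_right (Set.Ioo_subset_Ioo le_rfl hab))
  have hηm : Measurable η := hηmono.measurable
  -- pointwise splitting
  have hsplit : ∫⁻ p in S, h p / ENNReal.ofReal (p.2 ^ 2)
      = (∫⁻ p in S, h p * ENNReal.ofReal ((p.2 ^ 2)⁻¹ - (R ^ 2)⁻¹))
        + ∫⁻ p in S, h p * ENNReal.ofReal ((R ^ 2)⁻¹) := by
    rw [← lintegral_add_right']
    · apply setLIntegral_congr_fun hSm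
      intro p hp
      beta_reduce
      have hy : p.2 ∈ Set.Ioo s R := hp.2
      have hy0 : 0 < p.2 := lt_trans hs0 hy.1
      rw [← mul_add, ← ENNReal.ofReal_add (by
          have : (R^2)⁻¹ ≤ (p.2^2)⁻¹ := by
            apply inv_anti₀ (by positivity)
            nlinarith [hy.2]
          linarith) (by positivity)]
      rw [sub_add_cancel, ENNReal.div_eq_inv_mul, ← ENNReal.ofReal_inv_of_pos (by positivity),
        mul_comm]
    · exact (hh.mul measurable_const).aemeasurable
  -- second term bound
  have hB : ∫⁻ p in S, h p * ENNReal.ofReal ((R ^ 2)⁻¹) ≤ η R / ENNReal.ofReal (R ^ 2) := by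
    rw [lintegral_mul_const'' _ hh.aemeasurable, hη R,
      ENNReal.ofReal_inv_of_pos (by positivity), ← div_eq_mul_inv]
    apply ENNReal.div_le_div_right
    exact lintegral_mono_set (Set.prod_mono_right (Set.Ioo_subset_Ioo hs0.le le_rfl))
  -- the kernel function
  set c : ℝ → ℝ≥0∞ := fun t => 2 * ENNReal.ofReal ((t ^ 3)⁻¹) with hc_def
  have hcm : Measurable c := (measurable_id.pow_const 3).inv.ennreal_ofReal.const_mul 2
  have hcnetop : ∀ t, c t ≠ ∞ := fun t =>
    ENNReal.mul_ne_top (by norm_num) ENNReal.ofReal_ne_top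
  set G : (EuclideanSpace ℝ (Fin n) × ℝ) × ℝ → ℝ≥0∞ :=
    fun q => ({q : (EuclideanSpace ℝ (Fin n) × ℝ) × ℝ | q.1.2 < q.2 ∧ q.2 < R}).indicator
      (fun q => c q.2 * h q.1) q with hG_def
  have hTm : MeasurableSet {q : (EuclideanSpace ℝ (Fin n) × ℝ) × ℝ | q.1.2 < q.2 ∧ q.2 < R} := by
    apply MeasurableSet.inter
    · exact measurableSet_lt (measurable_fst.snd) measurable_snd
    · exact measurable_snd measurableSet_Iio
  have hGm : Measurable G :=
    Measurable.indicator ((hcm.comp measurable_snd).mul (hh.comp measurable_fst)) hTm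
  -- rewrite first term as iterated integral
  have hA1 : ∫⁻ p in S, h p * ENNReal.ofReal ((p.2 ^ 2)⁻¹ - (R ^ 2)⁻¹)
      = ∫⁻ p in S, ∫⁻ t, G (p, t) := by
    apply setLIntegral_congr_fun hSm
    intro p hp
    beta_reduce
    have hy : p.2 ∈ Set.Ioo s R := hp.2
    have hy0 : 0 < p.2 := lt_trans hs0 hy.1
    have haux := aux1 p.2 R hy0 hy.2
    have h2 : (2:ℝ) * ((((p.2 ^ 2)⁻¹ - (R ^ 2)⁻¹)) / 2) = (p.2 ^ 2)⁻¹ - (R ^ 2)⁻¹ := by ring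
    have hofr : ENNReal.ofReal ((p.2 ^ 2)⁻¹ - (R ^ 2)⁻¹)
        = 2 * ∫⁻ t in Set.Ioo p.2 R, ENNReal.ofReal ((t ^ 3)⁻¹) := by
      rw [haux, ← ENNReal.ofReal_ofNat 2, ← ENNReal.ofReal_mul (by norm_num), h2]
    have hGeq : (fun t => G (p, t))
        = fun t => (Set.Ioo p.2 R).indicator (fun t => c t * h p) t := by
      funext t
      simp only [hG_def, Set.indicator_apply, Set.mem_setOf_eq, Set.mem_Ioo]
    rw [hofr, hGeq]
    calc h p * (2 * ∫⁻ t in Set.Ioo p.2 R, ENNReal.ofReal ((t ^ 3)⁻¹))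
        = (∫⁻ t in Set.Ioo p.2 R, c t) * h p := by
          rw [mul_comm, hc_def, lintegral_const_mul' 2 _ (by norm_num)]
      _ = ∫⁻ t in Set.Ioo p.2 R, c t * h p := by
          rw [lintegral_mul_const'' _ hcm.aemeasurable]
      _ = ∫⁻ t, (Set.Ioo p.2 R).indicator (fun t => c t * h p) t := by
          rw [lintegral_indicator measurableSet_Ioo]
  -- swap the order of integration (Tonelli)
  have hswap : ∫⁻ p in S, ∫⁻ t, G (p, t) = ∫⁻ t, ∫⁻ p in S, G (p, t) := by
    exact lintegral_lintegral_swap (hGm.aemeasurable)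
  -- bound the inner integral
  have hbound : ∀ t : ℝ, (∫⁻ p in S, G (p, t))
      ≤ (Set.Ioo s R).indicator (fun t => 2 * (η t / ENNReal.ofReal (t ^ 3))) t := by
    intro t
    by_cases ht : t ∈ Set.Ioo s R
    · rw [Set.indicator_of_mem ht]
      have ht0 : 0 < t := lt_trans hs0 ht.1
      calc ∫⁻ p in S, G (p, t)
          = ∫⁻ p in S, ({p : EuclideanSpace ℝ (Fin n) × ℝ | p.2 < t}).indicator
              (fun p => c t * h p) p := by
            apply lintegral_congr
            intro p
            simp only [hG_def, Set.indicator_apply, Set.mem_setOf_eq]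
            by_cases hpt : p.2 < t
            · simp [hpt, ht.2]
            · simp [hpt]
        _ = ∫⁻ p in {p : EuclideanSpace ℝ (Fin n) × ℝ | p.2 < t} ∩ S, c t * h p := by
            have hUm : MeasurableSet {p : EuclideanSpace ℝ (Fin n) × ℝ | p.2 < t} :=
              measurable_snd measurableSet_Iio
            rw [lintegral_indicator hUm, Measure.restrict_restrict hUm]
        _ = c t * ∫⁻ p in {p : EuclideanSpace ℝ (Fin n) × ℝ | p.2 < t} ∩ S, h p := by
            rw [lintegral_const_mul' _ _ (hcnetop t)]
        _ ≤ c t * η t := by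
            apply mul_le_mul_right
            rw [hη t]
            apply lintegral_mono_set
            rintro ⟨x, y⟩ ⟨hyt, hxΩ, hy1, hy2⟩
            exact ⟨hxΩ, lt_trans hs0 hy1, hyt⟩
        _ = 2 * (η t / ENNReal.ofReal (t ^ 3)) := by
            show 2 * ENNReal.ofReal ((t ^ 3)⁻¹) * η t = 2 * (η t / ENNReal.ofReal (t ^ 3))
            rw [ENNReal.ofReal_inv_of_pos (by positivity), div_eq_mul_inv, mul_assoc,
              mul_comm ((ENNReal.ofReal (t ^ 3))⁻¹) (η t)]
    · rw [Set.indicator_of_notMem ht]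
      simp only [Set.mem_Ioo, not_and, not_lt] at ht
      have hz : ∫⁻ p in S, G (p, t) = ∫⁻ p in S, 0 := by
        apply setLIntegral_congr_fun hSm
        intro p hp
        apply Set.indicator_of_notMem
        simp only [Set.mem_setOf_eq, not_and, not_lt]
        intro hpt
        rcases lt_or_ge s t with h1 | h1
        · exact ht h1
        · exact absurd hpt (by linarith [hp.2.1] : ¬ p.2 < t)
      rw [hz, lintegral_zero]
  -- assemble
  have hfinal : ∫⁻ t, ∫⁻ p in S, G (p, t)
      ≤ 2 * ∫⁻ t in Set.Ioo s R, η t / ENNReal.ofReal (t ^ 3) := by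
    calc ∫⁻ t, ∫⁻ p in S, G (p, t)
        ≤ ∫⁻ t, (Set.Ioo s R).indicator (fun t => 2 * (η t / ENNReal.ofReal (t ^ 3))) t :=
          lintegral_mono hbound
      _ = ∫⁻ t in Set.Ioo s R, 2 * (η t / ENNReal.ofReal (t ^ 3)) :=
          lintegral_indicator measurableSet_Ioo _
      _ = 2 * ∫⁻ t in Set.Ioo s R, η t / ENNReal.ofReal (t ^ 3) :=
          lintegral_const_mul' 2 _ (by norm_num)
  calc ∫⁻ p in S, h p / ENNReal.ofReal (p.2 ^ 2)
      = (∫⁻ p in S, h p * ENNReal.ofReal ((p.2 ^ 2)⁻¹ - (R ^ 2)⁻¹))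
        + ∫⁻ p in S, h p * ENNReal.ofReal ((R ^ 2)⁻¹) := hsplit
    _ ≤ (2 * ∫⁻ t in Set.Ioo s R, η t / ENNReal.ofReal (t ^ 3)) + η R / ENNReal.ofReal (R ^ 2) := by
        apply add_le_add _ hB
        rw [hA1, hswap]
        exact hfinal
end

section
/- Let n ≥ 2. Let U ⊆ ℝ^{n-1} be an open neighborhood of the origin and γ : U → ℝ a C² function with γ(0) = 0 and ∇γ(0) = 0. Let J ⊆ (0,∞) be open, and let u be a C² real-valued function on an open subset of ℝⁿ × ℝ containing the set {(x', γ(x'), y) : x' ∈ U, y ∈ J}, where points are written (x₁,…,x_{n-1}, x_n, y). Assume the Neumann boundary condition written in these coordinates: for every x' ∈ U and every y ∈ J, Σ_{i=1}^{n-1} ∂_{x_i}u(x', γ(x'), y) · ∂_{x_i}γ(x') − ∂_{x_n}u(x', γ(x'), y) = 0. Then for every y ∈ J and every j = 1,…,n−1, one has ∂_{x_j}∂_{x_n}u(0, y) = Σ_{i=1}^{n-1} ∂_{x_i}u(0, y) · ∂_{x_i}∂_{x_j}γ(0). -/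
/-- Identity (Ki78) in the proof of Lemma 2.1 (abbiamo). A point of `ℝⁿ × ℝ` is written
`(x', xₙ, y)` with `x' ∈ ℝ^{n-1}`. Near the origin the domain is the epigraph of a `C²`
function `γ` with `γ(0) = 0`, `∇γ(0) = 0`, and `u` is `C²` near the lateral boundary and
satisfies the Neumann condition written in these coordinates. Then
`∂_{x_j}∂_{x_n} u(0,y) = Σ_i ∂_{x_i} u(0,y) ∂_{x_i}∂_{x_j} γ(0)` for all `y ∈ J`. -/
theorem stmt_6 (n : ℕ) (hn : 2 ≤ n)
    (U : Set (Fin (n - 1) → ℝ)) (hUopen : IsOpen U) (hU0 : (0 : Fin (n - 1) → ℝ) ∈ U)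
    (γ : (Fin (n - 1) → ℝ) → ℝ) (hγ : ContDiffOn ℝ 2 γ U)
    (hγ0 : γ 0 = 0) (hγ'0 : fderiv ℝ γ 0 = 0)
    (J : Set ℝ) (hJopen : IsOpen J) (hJpos : J ⊆ Set.Ioi (0 : ℝ))
    (V : Set ((Fin (n - 1) → ℝ) × ℝ × ℝ)) (hVopen : IsOpen V)
    (u : ((Fin (n - 1) → ℝ) × ℝ × ℝ) → ℝ) (hu : ContDiffOn ℝ 2 u V)
    (hgraph : ∀ x' ∈ U, ∀ y ∈ J, ((x', γ x', y) : (Fin (n - 1) → ℝ) × ℝ × ℝ) ∈ V)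
    (hNeu : ∀ x' ∈ U, ∀ y ∈ J,
      (∑ i : Fin (n - 1),
          fderiv ℝ u (x', γ x', y) (Pi.single i 1, 0, 0) * fderiv ℝ γ x' (Pi.single i 1))
        - fderiv ℝ u (x', γ x', y) (0, 1, 0) = 0) :
    ∀ y ∈ J, ∀ j : Fin (n - 1),
      fderiv ℝ (fun p => fderiv ℝ u p (0, 1, 0)) (0, 0, y) (Pi.single j 1, 0, 0)
        = ∑ i : Fin (n - 1),
            fderiv ℝ u (0, 0, y) (Pi.single i 1, 0, 0)
              * fderiv ℝ (fun z => fderiv ℝ γ z (Pi.single j 1)) 0 (Pi.single i 1) := by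
  intro y hy j
  have two_le : (2:ℕ) ≤ 2 := le_rfl
  set p₀ : (Fin (n - 1) → ℝ) × ℝ × ℝ := (0, 0, y) with hp₀
  have hmem : p₀ ∈ V := by simpa [hp₀, hγ0] using hgraph 0 hU0 y hy
  have huC : ContDiffAt ℝ 2 u p₀ := hu.contDiffAt (hVopen.mem_nhds hmem)
  have hγC : ContDiffAt ℝ 2 γ 0 := hγ.contDiffAt (hUopen.mem_nhds hU0)
  have huD : DifferentiableAt ℝ (fderiv ℝ u) p₀ :=
    (huC.fderiv_right (m := 1) (by norm_num)).differentiableAt one_ne_zero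
  have hγD : DifferentiableAt ℝ (fderiv ℝ γ) 0 :=
    (hγC.fderiv_right (m := 1) (by norm_num)).differentiableAt one_ne_zero
  have hγdiff : DifferentiableAt ℝ γ 0 := hγC.differentiableAt (by norm_num)
  set u'' := fderiv ℝ (fderiv ℝ u) p₀ with hu''
  set γ'' := fderiv ℝ (fderiv ℝ γ) 0 with hγ''
  set v : Fin (n - 1) → (Fin (n - 1) → ℝ) × ℝ × ℝ := fun i => (Pi.single i 1, 0, 0) with hv
  set en : (Fin (n - 1) → ℝ) × ℝ × ℝ := (0, 1, 0) with hen
  set G : (Fin (n - 1) → ℝ) →L[ℝ] ((Fin (n - 1) → ℝ) × ℝ × ℝ) := (ContinuousLinearMap.id ℝ (Fin (n - 1) → ℝ)).prod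
      ((0 : (Fin (n - 1) → ℝ) →L[ℝ] ℝ).prod (0 : (Fin (n - 1) → ℝ) →L[ℝ] ℝ)) with hG
  have hGapp : ∀ w : Fin (n - 1) → ℝ, G w = (w, 0, 0) := fun w => rfl
  -- g and its derivative at 0
  have hg : HasFDerivAt (fun x' : Fin (n - 1) → ℝ => ((x', γ x', y) : (Fin (n - 1) → ℝ) × ℝ × ℝ)) G 0 := by
    refine (hasFDerivAt_id 0).prodMk (HasFDerivAt.prodMk ?_ (hasFDerivAt_const y 0))
    simpa [hγ'0] using hγdiff.hasFDerivAt
  -- derivative of p ↦ fderiv u p along g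
  have hcomp : HasFDerivAt (fun x' : Fin (n - 1) → ℝ => fderiv ℝ u (x', γ x', y)) (u''.comp G) 0 := by
    have h1 : HasFDerivAt (fderiv ℝ u) u'' ((fun x' : Fin (n - 1) → ℝ => ((x', γ x', y) : (Fin (n - 1) → ℝ) × ℝ × ℝ)) 0) := by
      simpa [hγ0, hp₀] using huD.hasFDerivAt
    exact h1.comp 0 hg
  -- the Neumann expression
  set F : (Fin (n - 1) → ℝ) → ℝ := fun x' =>
    (∑ i : Fin (n - 1),
        fderiv ℝ u (x', γ x', y) (v i) * fderiv ℝ γ x' (Pi.single i 1))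
      - fderiv ℝ u (x', γ x', y) en with hF
  set D : (Fin (n - 1) → ℝ) →L[ℝ] ℝ :=
    (∑ i : Fin (n - 1),
        (fderiv ℝ u p₀ (v i) • (γ''.flip (Pi.single i 1)) +
          (fderiv ℝ γ 0 (Pi.single i 1)) • ((u''.comp G).flip (v i))))
      - (u''.comp G).flip en with hD
  have hDF : HasFDerivAt F D 0 := by
    refine HasFDerivAt.sub (HasFDerivAt.fun_sum fun i _ => ?_) ?_
    · have hfi : HasFDerivAt (fun x' : Fin (n - 1) → ℝ => fderiv ℝ u (x', γ x', y) (v i))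
          ((u''.comp G).flip (v i)) 0 := by
        have := hcomp.clm_apply (hasFDerivAt_const (v i) 0)
        simpa [hγ0, hp₀] using this
      have hgi : HasFDerivAt (fun x' : Fin (n - 1) → ℝ => fderiv ℝ γ x' (Pi.single i 1))
          (γ''.flip (Pi.single i 1)) 0 := by
        have := (hγD.hasFDerivAt).clm_apply (hasFDerivAt_const (Pi.single i 1) 0)
        simpa using this
      have := hfi.fun_mul hgi
      simpa [hγ0, hp₀] using this
    · have := hcomp.clm_apply (hasFDerivAt_const en 0)
      simpa using this
  have hD0 : D = 0 := by
    have hEV : F =ᶠ[nhds (0 : Fin (n - 1) → ℝ)] fun _ => (0 : ℝ) := by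
      filter_upwards [hUopen.mem_nhds hU0] with x' hx'
      simpa [hF, hv, hen] using hNeu x' hx' y hy
    have h0 : HasFDerivAt (fun _ : Fin (n - 1) → ℝ => (0 : ℝ)) D 0 := hDF.congr_of_eventuallyEq hEV.symm
    exact h0.unique (hasFDerivAt_const 0 0)
  have key : D (Pi.single j 1) = 0 := by rw [hD0]; rfl
  -- rewrite LHS of the goal
  have hlhs : fderiv ℝ (fun p : (Fin (n - 1) → ℝ) × ℝ × ℝ => fderiv ℝ u p en) p₀ (v j) = u'' (v j) en := by
    have h1 : HasFDerivAt (fun p : (Fin (n - 1) → ℝ) × ℝ × ℝ => fderiv ℝ u p en) (u''.flip en) p₀ :=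
      by simpa using (huD.hasFDerivAt).clm_apply (hasFDerivAt_const en p₀)
    rw [h1.fderiv]; rfl
  have hrhs : ∀ i : Fin (n - 1),
      fderiv ℝ (fun z : Fin (n - 1) → ℝ => fderiv ℝ γ z (Pi.single j 1)) 0 (Pi.single i 1)
        = γ'' (Pi.single i 1) (Pi.single j 1) := by
    intro i
    have h1 : HasFDerivAt (fun z : Fin (n - 1) → ℝ => fderiv ℝ γ z (Pi.single j 1))
        (γ''.flip (Pi.single j 1)) 0 :=
      by simpa using (hγD.hasFDerivAt).clm_apply (hasFDerivAt_const (Pi.single j 1) 0)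
    rw [h1.fderiv]; rfl
  have hsymm : ∀ i : Fin (n - 1),
      γ'' (Pi.single j 1) (Pi.single i 1) = γ'' (Pi.single i 1) (Pi.single j 1) :=
    fun i => hγC.isSymmSndFDerivAt (by norm_num) _ _
  -- unfold key
  have keyval : (∑ i : Fin (n - 1),
      fderiv ℝ u p₀ (v i) * γ'' (Pi.single j 1) (Pi.single i 1)) - u'' (v j) en = 0 := by
    have : D (Pi.single j 1) =
        (∑ i : Fin (n - 1),
          fderiv ℝ u p₀ (v i) * γ'' (Pi.single j 1) (Pi.single i 1)) - u'' (v j) en := by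
      simp [hD, hγ'0, ContinuousLinearMap.sum_apply, smul_eq_mul]
      rfl
    rw [← this, key]
  have hGj : G (Pi.single j 1) = v j := rfl
  calc fderiv ℝ (fun p : (Fin (n - 1) → ℝ) × ℝ × ℝ => fderiv ℝ u p (0, 1, 0)) (0, 0, y) (Pi.single j 1, 0, 0)
      = u'' (v j) en := hlhs
    _ = ∑ i : Fin (n - 1), fderiv ℝ u p₀ (v i) * γ'' (Pi.single j 1) (Pi.single i 1) := by
        have := keyval; linarith
    _ = ∑ i : Fin (n - 1),
          fderiv ℝ u (0, 0, y) (Pi.single i 1, 0, 0)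
            * fderiv ℝ (fun z : Fin (n - 1) → ℝ => fderiv ℝ γ z (Pi.single j 1)) 0 (Pi.single i 1) := by
        refine Finset.sum_congr rfl fun i _ => ?_
        rw [hrhs i, hsymm i]
end

section
/- Let n ≥ 2. Let U ⊆ ℝ^{n-1} be an open neighborhood of the origin and γ : U → ℝ a C² function with γ(0) = 0 and ∇γ(0) = 0. Let J ⊆ (0,∞) be open, and let u be a C² real-valued function on an open subset of ℝⁿ × ℝ containing the set {(x', γ(x'), y) : x' ∈ U, y ∈ J}, where points are written (x₁,…,x_{n-1}, x_n, y). Assume the Neumann boundary condition written in these coordinates: for every x' ∈ U and every y ∈ J, Σ_{i=1}^{n-1} ∂_{x_i}u(x', γ(x'), y) · ∂_{x_i}γ(x') − ∂_{x_n}u(x', γ(x'), y) = 0. Write X = (X₁,…,X_{n+1}) := (x₁,…,x_n,y). Then for every y ∈ J: (i) ∂_y u(0,y) · ∂_{x_n}∂_y u(0,y) = 0, and (ii) Σ_{k=1}^{n+1} ∂_{X_k}u(0,y) · ∂_{x_n}∂_{X_k}u(0,y) = Σ_{i,j=1}^{n-1} ∂_{x_i}∂_{x_j}γ(0) · ∂_{x_i}u(0,y)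 · ∂_{x_j}u(0,y). Equivalently, since the exterior normal at the origin is ν = −e_n, one has ∇u(0,y) · ∂_ν(∇u)(0,y) = ∇_x u(0,y) · ∂_ν(∇_x u)(0,y) = − Σ_{i,j=1}^{n-1} ∂_{x_i}∂_{x_j}γ(0) ∂_{x_i}u(0,y) ∂_{x_j}u(0,y). -/
/-- Identity (key-eq-EUCLIDEAN) of Lemma 2.1 (abbiamo). A point of `ℝⁿ × ℝ` is written
`(x', xₙ, y)`. With `γ`, `u` as in the normal-coordinates setting and the Neumann
condition, for every `y ∈ J`:
(i) `∂_y u(0,y) · ∂_{x_n}∂_y u(0,y) = 0`, and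
(ii) `Σ_{k=1}^{n+1} ∂_{X_k} u(0,y) · ∂_{x_n}∂_{X_k} u(0,y)
      = Σ_{i,j} ∂_{x_i}∂_{x_j}γ(0) ∂_{x_i}u(0,y) ∂_{x_j}u(0,y)`,
where the `X_k` run over the coordinates `x₁,…,x_{n-1}, x_n, y` (equivalently, since the
outer normal at the origin is `−eₙ`, `∇u · ∂_ν(∇u) = ∇ₓu · ∂_ν(∇ₓu) = −Σ_{i,j} …`). -/
theorem stmt_7 (n : ℕ) (hn : 2 ≤ n)
    (U : Set (Fin (n - 1) → ℝ)) (hUopen : IsOpen U) (hU0 : (0 : Fin (n - 1) → ℝ) ∈ U)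
    (γ : (Fin (n - 1) → ℝ) → ℝ) (hγ : ContDiffOn ℝ 2 γ U)
    (hγ0 : γ 0 = 0) (hγ'0 : fderiv ℝ γ 0 = 0)
    (J : Set ℝ) (hJopen : IsOpen J) (hJpos : J ⊆ Set.Ioi (0 : ℝ))
    (V : Set ((Fin (n - 1) → ℝ) × ℝ × ℝ)) (hVopen : IsOpen V)
    (u : ((Fin (n - 1) → ℝ) × ℝ × ℝ) → ℝ) (hu : ContDiffOn ℝ 2 u V)
    (hgraph : ∀ x' ∈ U, ∀ y ∈ J, ((x', γ x', y) : (Fin (n - 1) → ℝ) × ℝ × ℝ) ∈ V)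
    (hNeu : ∀ x' ∈ U, ∀ y ∈ J,
      (∑ i : Fin (n - 1),
          fderiv ℝ u (x', γ x', y) (Pi.single i 1, 0, 0) * fderiv ℝ γ x' (Pi.single i 1))
        - fderiv ℝ u (x', γ x', y) (0, 1, 0) = 0) :
    ∀ y ∈ J,
      (fderiv ℝ u (0, 0, y) (0, 0, 1)
          * fderiv ℝ (fun p => fderiv ℝ u p (0, 0, 1)) (0, 0, y) (0, 1, 0) = 0)
      ∧
      ((∑ i : Fin (n - 1),
          fderiv ℝ u (0, 0, y) (Pi.single i 1, 0, 0)
            * fderiv ℝ (fun p => fderiv ℝ u p (Pi.single i 1, 0, 0)) (0, 0, y) (0, 1, 0))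
        + fderiv ℝ u (0, 0, y) (0, 1, 0)
            * fderiv ℝ (fun p => fderiv ℝ u p (0, 1, 0)) (0, 0, y) (0, 1, 0)
        + fderiv ℝ u (0, 0, y) (0, 0, 1)
            * fderiv ℝ (fun p => fderiv ℝ u p (0, 0, 1)) (0, 0, y) (0, 1, 0)
        = ∑ i : Fin (n - 1), ∑ j : Fin (n - 1),
            fderiv ℝ (fun z => fderiv ℝ γ z (Pi.single j 1)) 0 (Pi.single i 1)
              * fderiv ℝ u (0, 0, y) (Pi.single i 1, 0, 0)
              * fderiv ℝ u (0, 0, y) (Pi.single j 1, 0, 0)) := by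
  intro y hy
  classical
  have hq : (((0 : Fin (n - 1) → ℝ), (0 : ℝ), y) : (Fin (n - 1) → ℝ) × ℝ × ℝ) ∈ V := by
    have := hgraph 0 hU0 y hy
    rwa [hγ0] at this
  have huq : ContDiffAt ℝ 2 u (0, 0, y) := hu.contDiffAt (hVopen.mem_nhds hq)
  have hBd : DifferentiableAt ℝ (fderiv ℝ u) (0, 0, y) :=
    (huq.fderiv_right (m := 1) (by norm_num)).differentiableAt one_ne_zero
  set B := fderiv ℝ (fderiv ℝ u) ((0 : Fin (n - 1) → ℝ), (0 : ℝ), y) with hBdef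
  have hsymm : ∀ v w, B v w = B w v := huq.isSymmSndFDerivAt (by simp)
  have hA : ∀ v : (Fin (n - 1) → ℝ) × ℝ × ℝ,
      HasFDerivAt (fun p => fderiv ℝ u p v)
        ((ContinuousLinearMap.apply ℝ ℝ v).comp B) (0, 0, y) := fun v =>
    (ContinuousLinearMap.apply ℝ ℝ v).hasFDerivAt.comp _ hBd.hasFDerivAt
  have hAfd : ∀ v w : (Fin (n - 1) → ℝ) × ℝ × ℝ,
      fderiv ℝ (fun p => fderiv ℝ u p v) (0, 0, y) w = B w v := fun v w => by
    rw [(hA v).fderiv]; rfl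
  -- γ side
  have hγq : ContDiffAt ℝ 2 γ 0 := hγ.contDiffAt (hUopen.mem_nhds hU0)
  have hΓd : DifferentiableAt ℝ (fderiv ℝ γ) 0 :=
    (hγq.fderiv_right (m := 1) (by norm_num)).differentiableAt one_ne_zero
  set Γ := fderiv ℝ (fderiv ℝ γ) (0 : Fin (n - 1) → ℝ) with hΓdef
  have hΓA : ∀ v : Fin (n - 1) → ℝ,
      HasFDerivAt (fun z => fderiv ℝ γ z v)
        ((ContinuousLinearMap.apply ℝ ℝ v).comp Γ) (0 : Fin (n - 1) → ℝ) := fun v =>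
    (ContinuousLinearMap.apply ℝ ℝ v).hasFDerivAt.comp _ hΓd.hasFDerivAt
  have hΓfd : ∀ v w : Fin (n - 1) → ℝ,
      fderiv ℝ (fun z => fderiv ℝ γ z v) 0 w = Γ w v := fun v w => by
    rw [(hΓA v).fderiv]; rfl
  have hγdiff : DifferentiableAt ℝ γ 0 := hγq.differentiableAt two_ne_zero
  have hγd0 : HasFDerivAt γ (0 : (Fin (n - 1) → ℝ) →L[ℝ] ℝ) 0 := by
    have := hγdiff.hasFDerivAt; rwa [hγ'0] at this
  -- the map Φ and its derivative at (0, y)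
  set DΦ : ((Fin (n - 1) → ℝ) × ℝ) →L[ℝ] ((Fin (n - 1) → ℝ) × ℝ × ℝ) :=
    (ContinuousLinearMap.fst ℝ (Fin (n - 1) → ℝ) ℝ).prod
      ((0 : ((Fin (n - 1) → ℝ) × ℝ) →L[ℝ] ℝ).prod
        (ContinuousLinearMap.snd ℝ (Fin (n - 1) → ℝ) ℝ)) with hDΦdef
  have hΦ : HasFDerivAt
      (fun z : (Fin (n - 1) → ℝ) × ℝ => ((z.1, γ z.1, z.2) : (Fin (n - 1) → ℝ) × ℝ × ℝ))
      DΦ ((0 : Fin (n - 1) → ℝ), y) := by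
    refine HasFDerivAt.prodMk (hasFDerivAt_fst) (HasFDerivAt.prodMk ?_ (hasFDerivAt_snd))
    have := hγd0.comp ((0 : Fin (n - 1) → ℝ), y)
      (hasFDerivAt_fst : HasFDerivAt _ (ContinuousLinearMap.fst ℝ (Fin (n - 1) → ℝ) ℝ) _)
    simpa [Function.comp_def] using this
  have hav : ∀ v : (Fin (n - 1) → ℝ) × ℝ × ℝ,
      HasFDerivAt (fun z : (Fin (n - 1) → ℝ) × ℝ => fderiv ℝ u (z.1, γ z.1, z.2) v)
        (((ContinuousLinearMap.apply ℝ ℝ v).comp B).comp DΦ)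
        ((0 : Fin (n - 1) → ℝ), y) := by
    intro v
    have h1 : HasFDerivAt (fun p => fderiv ℝ u p v)
        ((ContinuousLinearMap.apply ℝ ℝ v).comp B) ((0 : Fin (n - 1) → ℝ), γ 0, y) := by
      rw [hγ0]; exact hA v
    exact h1.comp ((0 : Fin (n - 1) → ℝ), y) hΦ
  have hbv : ∀ v : Fin (n - 1) → ℝ,
      HasFDerivAt (fun z : (Fin (n - 1) → ℝ) × ℝ => fderiv ℝ γ z.1 v)
        (((ContinuousLinearMap.apply ℝ ℝ v).comp Γ).comp
          (ContinuousLinearMap.fst ℝ (Fin (n - 1) → ℝ) ℝ))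
        ((0 : Fin (n - 1) → ℝ), y) := fun v =>
    by have := (hΓA v).comp ((0 : Fin (n - 1) → ℝ), y)
         (hasFDerivAt_fst : HasFDerivAt _ (ContinuousLinearMap.fst ℝ (Fin (n - 1) → ℝ) ℝ) _); exact this
  -- derivative of the Neumann identity
  have hFd := HasFDerivAt.sub
    (HasFDerivAt.sum (fun i (_ : i ∈ Finset.univ) => (hav (Pi.single i 1, 0, 0)).mul (hbv (Pi.single i 1))))
    (hav (0, 1, 0))
  have hF0 : (fun z : (Fin (n - 1) → ℝ) × ℝ =>
      (∑ i : Fin (n - 1),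
          fderiv ℝ u (z.1, γ z.1, z.2) (Pi.single i 1, 0, 0) * fderiv ℝ γ z.1 (Pi.single i 1))
        - fderiv ℝ u (z.1, γ z.1, z.2) (0, 1, 0))
      =ᶠ[nhds ((0 : Fin (n - 1) → ℝ), y)] (fun _ => (0 : ℝ)) := by
    filter_upwards [(hUopen.prod hJopen).mem_nhds (Set.mk_mem_prod hU0 hy)] with z hz
    exact hNeu z.1 hz.1 z.2 hz.2
  have hD0 := ((hFd.congr_of_eventuallyEq (hF0.symm.trans
    (Filter.Eventually.of_forall fun z => by simp [Finset.sum_apply]))).unique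
    (hasFDerivAt_const (0 : ℝ) ((0 : Fin (n - 1) → ℝ), y)))
  have key : ∀ w : (Fin (n - 1) → ℝ) × ℝ,
      (∑ i : Fin (n - 1),
          fderiv ℝ u ((0 : Fin (n - 1) → ℝ), γ 0, y) (Pi.single i 1, 0, 0)
            * (Γ w.1 (Pi.single i 1)))
        - B (w.1, 0, w.2) ((0 : Fin (n - 1) → ℝ), 1, 0) = 0 := by
    intro w
    have h := congrArg (fun L : ((Fin (n - 1) → ℝ) × ℝ) →L[ℝ] ℝ => L w) hD0
    simp only [ContinuousLinearMap.sub_apply, ContinuousLinearMap.coe_sum',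
      Finset.sum_apply, ContinuousLinearMap.add_apply, ContinuousLinearMap.smul_apply,
      ContinuousLinearMap.comp_apply, ContinuousLinearMap.apply_apply,
      ContinuousLinearMap.prod_apply, ContinuousLinearMap.coe_fst',
      ContinuousLinearMap.coe_snd', ContinuousLinearMap.zero_apply, hγ'0,
      smul_eq_mul, mul_zero, zero_mul, add_zero, zero_add] at h
    simpa [hDΦdef, smul_eq_mul] using h
  -- basic facts
  have fact1 : fderiv ℝ u ((0 : Fin (n - 1) → ℝ), (0 : ℝ), y) (0, 1, 0) = 0 := by
    have h := hNeu 0 hU0 y hy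
    rw [hγ0] at h
    simp only [hγ'0, ContinuousLinearMap.zero_apply, mul_zero, Finset.sum_const_zero,
      zero_sub, neg_eq_zero] at h
    exact h
  have fact2 : B ((0 : Fin (n - 1) → ℝ), 0, 1) ((0 : Fin (n - 1) → ℝ), 1, 0) = 0 := by
    have h := key ((0 : Fin (n - 1) → ℝ), 1)
    simpa using h
  have fact3 : ∀ j : Fin (n - 1),
      B (Pi.single j 1, 0, 0) ((0 : Fin (n - 1) → ℝ), 1, 0)
        = ∑ i : Fin (n - 1),
            fderiv ℝ u ((0 : Fin (n - 1) → ℝ), (0 : ℝ), y) (Pi.single i 1, 0, 0)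
              * Γ (Pi.single j 1) (Pi.single i 1) := by
    intro j
    have h := key ((Pi.single j 1 : Fin (n - 1) → ℝ), 0)
    rw [hγ0] at h
    linarith [h]
  constructor
  · rw [hAfd]
    rw [hsymm ((0 : Fin (n - 1) → ℝ), 1, 0) ((0 : Fin (n - 1) → ℝ), 0, 1)]
    rw [fact2, mul_zero]
  · have hmid : fderiv ℝ u ((0 : Fin (n - 1) → ℝ), (0 : ℝ), y) ((0 : Fin (n - 1) → ℝ), 1, 0) = 0 :=
      fact1
    calc (∑ i : Fin (n - 1),
          fderiv ℝ u (0, 0, y) (Pi.single i 1, 0, 0)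
            * fderiv ℝ (fun p => fderiv ℝ u p (Pi.single i 1, 0, 0)) (0, 0, y) (0, 1, 0))
        + fderiv ℝ u (0, 0, y) (0, 1, 0)
            * fderiv ℝ (fun p => fderiv ℝ u p (0, 1, 0)) (0, 0, y) (0, 1, 0)
        + fderiv ℝ u (0, 0, y) (0, 0, 1)
            * fderiv ℝ (fun p => fderiv ℝ u p (0, 0, 1)) (0, 0, y) (0, 1, 0)
        = ∑ j : Fin (n - 1),
            fderiv ℝ u (0, 0, y) (Pi.single j 1, 0, 0)
              * ∑ i : Fin (n - 1),
                  fderiv ℝ u ((0 : Fin (n - 1) → ℝ), (0 : ℝ), y) (Pi.single i 1, 0, 0)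
                    * Γ (Pi.single j 1) (Pi.single i 1) := by
          rw [hmid, zero_mul, add_zero, hAfd, hsymm, fact2, mul_zero, add_zero]
          refine Finset.sum_congr rfl fun j _ => ?_
          rw [hAfd, hsymm, fact3 j]
      _ = ∑ i : Fin (n - 1), ∑ j : Fin (n - 1),
            fderiv ℝ (fun z => fderiv ℝ γ z (Pi.single j 1)) 0 (Pi.single i 1)
              * fderiv ℝ u (0, 0, y) (Pi.single i 1, 0, 0)
              * fderiv ℝ u (0, 0, y) (Pi.single j 1, 0, 0) := by
          simp only [hΓfd, Finset.mul_sum]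
          refine Finset.sum_congr rfl fun i _ => Finset.sum_congr rfl fun j _ => by ring
end

section
/- Let n ≥ 2. Let U ⊆ ℝ^{n-1} be an open neighborhood of the origin and γ : U → ℝ a C² function with γ(0) = 0 and ∇γ(0) = 0, and assume in addition that γ is convex on U. Let J ⊆ (0,∞) be open, and let u be a C² real-valued function on an open subset of ℝⁿ × ℝ containing the set {(x', γ(x'), y) : x' ∈ U, y ∈ J}, where points are written (x₁,…,x_{n-1}, x_n, y). Assume the Neumann boundary condition written in these coordinates: for every x' ∈ U and every y ∈ J, Σ_{i=1}^{n-1} ∂_{x_i}u(x', γ(x'), y) · ∂_{x_i}γ(x') − ∂_{x_n}u(x', γ(x'), y) = 0. Write X = (X₁,…,X_{n+1}) := (x₁,…,x_n,y). Then for every y ∈ J, Σ_{k=1}^{n+1} ∂_{X_k}u(0,y) · ∂_{x_n}∂_{X_k}u(0,y) ≥ 0; equivalently, since the exterior normal at the origin is ν = −e_n, one has ∇u(0,y) · ∂_ν(∇u)(0,y) ≤ 0. -/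
open Filter Set

private lemma aux_mono_deriv_nonneg {s : Set ℝ} {h : ℝ → ℝ} {x d : ℝ}
    (hs : s ∈ nhds x) (hm : MonotoneOn h s) (hd : HasDerivAt h d x) : 0 ≤ d := by
  have hx : x ∈ s := mem_of_mem_nhds hs
  have htend := hasDerivAt_iff_tendsto_slope.mp hd
  refine ge_of_tendsto htend ?_
  have hev : ∀ᶠ t in nhdsWithin x {x}ᶜ, t ∈ s :=
    Filter.Eventually.filter_mono nhdsWithin_le_nhds hs
  filter_upwards [hev] with t ht
  rcases lt_trichotomy x t with hlt | rfl | hgt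
  · rw [slope_def_field]
    exact div_nonneg (sub_nonneg.2 (hm hx ht hlt.le)) (sub_nonneg.2 hlt.le)
  · simp [slope_def_field]
  · rw [slope_comm, slope_def_field]
    exact div_nonneg (sub_nonneg.2 (hm ht hx hgt.le)) (sub_nonneg.2 hgt.le)

private lemma aux_sum_single {m : ℕ} (v : Fin m → ℝ) (φ : (Fin m → ℝ) →L[ℝ] ℝ) :
    (∑ i : Fin m, v i * φ (Pi.single i 1)) = φ v := by
  have h : (v : Fin m → ℝ) = ∑ i : Fin m, v i • (Pi.single i 1 : Fin m → ℝ) := by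
    funext j
    simp [Finset.sum_apply, Pi.single_apply, mul_comm]
  conv_rhs => rw [h]
  rw [map_sum]
  simp [smul_eq_mul]

private lemma aux_sum_single_prod {m : ℕ} (v : Fin m → ℝ)
    (φ : ((Fin m → ℝ) × ℝ × ℝ) →L[ℝ] ℝ) :
    (∑ i : Fin m, v i * φ (Pi.single i 1, 0, 0)) = φ (v, 0, 0) := by
  have := aux_sum_single v (φ.comp (ContinuousLinearMap.inl ℝ (Fin m → ℝ) (ℝ × ℝ)))
  simp only [ContinuousLinearMap.comp_apply, ContinuousLinearMap.inl_apply] at this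
  exact this

/-- Formula (key-eq-EUCLIDEAN-2) of Lemma 2.1 (abbiamo): in the normal-coordinates
setting, if in addition `γ` is convex on `U` (convexity of the domain), then for every
`y ∈ J` one has `Σ_{k=1}^{n+1} ∂_{X_k} u(0,y) · ∂_{x_n}∂_{X_k} u(0,y) ≥ 0`; equivalently,
since the outer normal at the origin is `−eₙ`, `∇u(0,y) · ∂_ν(∇u)(0,y) ≤ 0`. -/
theorem stmt_8 (n : ℕ) (hn : 2 ≤ n)
    (U : Set (Fin (n - 1) → ℝ)) (hUopen : IsOpen U) (hU0 : (0 : Fin (n - 1) → ℝ) ∈ U)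
    (γ : (Fin (n - 1) → ℝ) → ℝ) (hγ : ContDiffOn ℝ 2 γ U)
    (hγ0 : γ 0 = 0) (hγ'0 : fderiv ℝ γ 0 = 0) (hγconv : ConvexOn ℝ U γ)
    (J : Set ℝ) (hJopen : IsOpen J) (hJpos : J ⊆ Set.Ioi (0 : ℝ))
    (V : Set ((Fin (n - 1) → ℝ) × ℝ × ℝ)) (hVopen : IsOpen V)
    (u : ((Fin (n - 1) → ℝ) × ℝ × ℝ) → ℝ) (hu : ContDiffOn ℝ 2 u V)
    (hgraph : ∀ x' ∈ U, ∀ y ∈ J, ((x', γ x', y) : (Fin (n - 1) → ℝ) × ℝ × ℝ) ∈ V)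
    (hNeu : ∀ x' ∈ U, ∀ y ∈ J,
      (∑ i : Fin (n - 1),
          fderiv ℝ u (x', γ x', y) (Pi.single i 1, 0, 0) * fderiv ℝ γ x' (Pi.single i 1))
        - fderiv ℝ u (x', γ x', y) (0, 1, 0) = 0) :
    ∀ y ∈ J,
      0 ≤ (∑ i : Fin (n - 1),
            fderiv ℝ u (0, 0, y) (Pi.single i 1, 0, 0)
              * fderiv ℝ (fun p => fderiv ℝ u p (Pi.single i 1, 0, 0)) (0, 0, y) (0, 1, 0))
          + fderiv ℝ u (0, 0, y) (0, 1, 0)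
              * fderiv ℝ (fun p => fderiv ℝ u p (0, 1, 0)) (0, 0, y) (0, 1, 0)
          + fderiv ℝ u (0, 0, y) (0, 0, 1)
              * fderiv ℝ (fun p => fderiv ℝ u p (0, 0, 1)) (0, 0, y) (0, 1, 0) := by
  intro y hy
  -- basic setup
  have hp₀V : (((0 : Fin (n - 1) → ℝ), (0:ℝ), y) : (Fin (n - 1) → ℝ) × ℝ × ℝ) ∈ V := by
    have := hgraph 0 hU0 y hy
    rwa [hγ0] at this
  have huAt : ContDiffAt ℝ 2 u ((0 : Fin (n - 1) → ℝ), (0:ℝ), y) :=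
    hu.contDiffAt (hVopen.mem_nhds hp₀V)
  have hfd1 : ContDiffAt ℝ 1 (fderiv ℝ u) ((0 : Fin (n - 1) → ℝ), (0:ℝ), y) :=
    huAt.fderiv_right (by norm_num)
  set D := fderiv ℝ (fderiv ℝ u) ((0 : Fin (n - 1) → ℝ), (0:ℝ), y) with hDdef
  have hD : HasFDerivAt (fderiv ℝ u) D ((0 : Fin (n - 1) → ℝ), (0:ℝ), y) :=
    (hfd1.differentiableAt one_ne_zero).hasFDerivAt
  have hsymm : ∀ v w, D v w = D w v := by
    intro v w
    exact (huAt.isSymmSndFDerivAt (by norm_num)).eq v w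
  have hkey : ∀ (w v : (Fin (n - 1) → ℝ) × ℝ × ℝ),
      fderiv ℝ (fun p => fderiv ℝ u p w) ((0 : Fin (n - 1) → ℝ), (0:ℝ), y) v = D v w := by
    intro w v
    have h1 : HasFDerivAt (fun p => fderiv ℝ u p w)
        ((ContinuousLinearMap.apply ℝ ℝ w).comp D) ((0 : Fin (n - 1) → ℝ), (0:ℝ), y) :=
      by simpa [Function.comp_def] using
        ((ContinuousLinearMap.apply ℝ ℝ w).hasFDerivAt).comp
          (((0 : Fin (n - 1) → ℝ), (0:ℝ), y) : (Fin (n - 1) → ℝ) × ℝ × ℝ) hD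
    rw [h1.fderiv]
    rfl
  -- Step A : ∂ₙ u (0,0,y') = 0 for y' ∈ J
  have hA : ∀ y' ∈ J,
      fderiv ℝ u ((0 : Fin (n - 1) → ℝ), (0:ℝ), y') ((0 : Fin (n - 1) → ℝ), (1:ℝ), (0:ℝ)) = 0 := by
    intro y' hy'
    have h := hNeu 0 hU0 y' hy'
    rw [hγ0] at h
    simpa [hγ'0] using h
  -- Step B : mixed derivative ∂_y ∂ₙ u (0,0,y) = 0
  have hyJ : J ∈ nhds y := hJopen.mem_nhds hy
  have hcurve : HasDerivAt (fun y' : ℝ => (((0 : Fin (n - 1) → ℝ), (0:ℝ), y') : (Fin (n - 1) → ℝ) × ℝ × ℝ))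
      (((0 : Fin (n - 1) → ℝ), (0:ℝ), (1:ℝ))) y :=
    HasDerivAt.prodMk (hasDerivAt_const y (0 : Fin (n - 1) → ℝ))
      (HasDerivAt.prodMk (hasDerivAt_const y (0:ℝ)) (hasDerivAt_id y))
  have hcomp : HasDerivAt
      (fun y' : ℝ => fderiv ℝ u ((0 : Fin (n - 1) → ℝ), (0:ℝ), y') ((0 : Fin (n - 1) → ℝ), (1:ℝ), (0:ℝ)))
      (D ((0 : Fin (n - 1) → ℝ), (0:ℝ), (1:ℝ)) ((0 : Fin (n - 1) → ℝ), (1:ℝ), (0:ℝ))) y := by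
    have h1 : HasFDerivAt (fun p => fderiv ℝ u p ((0 : Fin (n - 1) → ℝ), (1:ℝ), (0:ℝ)))
        ((ContinuousLinearMap.apply ℝ ℝ ((0 : Fin (n - 1) → ℝ), (1:ℝ), (0:ℝ))).comp D)
        ((0 : Fin (n - 1) → ℝ), (0:ℝ), y) := by
      simpa [Function.comp_def] using
        ((ContinuousLinearMap.apply ℝ ℝ ((0 : Fin (n - 1) → ℝ), (1:ℝ), (0:ℝ))).hasFDerivAt).comp
          (((0 : Fin (n - 1) → ℝ), (0:ℝ), y) : (Fin (n - 1) → ℝ) × ℝ × ℝ) hD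
    simpa [Function.comp_def] using h1.comp_hasDerivAt y hcurve
  have hB : D ((0 : Fin (n - 1) → ℝ), (0:ℝ), (1:ℝ)) ((0 : Fin (n - 1) → ℝ), (1:ℝ), (0:ℝ)) = 0 := by
    have hev : (fun _ : ℝ => (0:ℝ)) =ᶠ[nhds y]
        (fun y' : ℝ => fderiv ℝ u ((0 : Fin (n - 1) → ℝ), (0:ℝ), y') ((0 : Fin (n - 1) → ℝ), (1:ℝ), (0:ℝ))) := by
      filter_upwards [hyJ] with t ht
      exact (hA t ht).symm
    have h0 := hcomp.congr_of_eventuallyEq hev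
    exact h0.unique (hasDerivAt_const y 0)
  -- Step D : the key quantity
  set v' : Fin (n - 1) → ℝ := fun i => fderiv ℝ u ((0 : Fin (n - 1) → ℝ), (0:ℝ), y) (Pi.single i 1, 0, 0)
    with hv'
  set S : Set ℝ := {t : ℝ | t • v' ∈ U} with hSdef
  have hSopen : IsOpen S := hUopen.preimage (by fun_prop)
  have hS0 : (0:ℝ) ∈ S := by simp [hSdef, hU0]
  have hSnhds : S ∈ nhds 0 := hSopen.mem_nhds hS0
  have hγAt : ContDiffAt ℝ 2 γ 0 := hγ.contDiffAt (hUopen.mem_nhds hU0)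
  have hγd1 : ContDiffAt ℝ 1 (fderiv ℝ γ) 0 := hγAt.fderiv_right (by norm_num)
  set Dγ := fderiv ℝ (fderiv ℝ γ) (0 : Fin (n - 1) → ℝ) with hDγdef
  have hDγ : HasFDerivAt (fderiv ℝ γ) Dγ 0 := (hγd1.differentiableAt one_ne_zero).hasFDerivAt
  have hmv : ∀ t : ℝ, HasDerivAt (fun s : ℝ => s • v') v' t := by
    intro t
    simpa using (hasDerivAt_id t).smul_const v'
  have hγm : HasDerivAt (fun t : ℝ => γ (t • v')) (0:ℝ) 0 := by
    have hγdiff0 : HasFDerivAt γ (fderiv ℝ γ 0) ((0:ℝ) • v') := by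
      rw [zero_smul]
      exact (hγAt.differentiableAt two_ne_zero).hasFDerivAt
    have := hγdiff0.comp_hasDerivAt 0 (hmv 0)
    simpa [hγ'0, Function.comp_def] using this
  have hpt : (((0:ℝ) • v', γ ((0:ℝ) • v'), y) : (Fin (n - 1) → ℝ) × ℝ × ℝ)
      = ((0 : Fin (n - 1) → ℝ), (0:ℝ), y) := by
    rw [zero_smul, hγ0]
  have hc : HasDerivAt (fun t : ℝ => ((t • v', γ (t • v'), y) : (Fin (n - 1) → ℝ) × ℝ × ℝ))
      ((v', (0:ℝ), (0:ℝ))) 0 :=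
    HasDerivAt.prodMk (hmv 0) (HasDerivAt.prodMk hγm (hasDerivAt_const 0 y))
  have ha : ∀ w : (Fin (n - 1) → ℝ) × ℝ × ℝ,
      HasDerivAt (fun t : ℝ => fderiv ℝ u (t • v', γ (t • v'), y) w)
        (D (v', 0, 0) w) 0 := by
    intro w
    have h1 : HasFDerivAt (fun p => fderiv ℝ u p w)
        ((ContinuousLinearMap.apply ℝ ℝ w).comp D) (((0:ℝ) • v', γ ((0:ℝ) • v'), y)) := by
      rw [hpt]
      simpa [Function.comp_def] using
        ((ContinuousLinearMap.apply ℝ ℝ w).hasFDerivAt).comp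
          (((0 : Fin (n - 1) → ℝ), (0:ℝ), y) : (Fin (n - 1) → ℝ) × ℝ × ℝ) hD
    simpa [Function.comp_def] using h1.comp_hasDerivAt 0 hc
  have hb : ∀ z : Fin (n - 1) → ℝ,
      HasDerivAt (fun t : ℝ => fderiv ℝ γ (t • v') z) ((Dγ v') z) 0 := by
    intro z
    have h1 : HasFDerivAt (fun q => fderiv ℝ γ q z)
        ((ContinuousLinearMap.apply ℝ ℝ z).comp Dγ) ((0:ℝ) • v') := by
      rw [zero_smul]
      simpa [Function.comp_def] using
        ((ContinuousLinearMap.apply ℝ ℝ z).hasFDerivAt).comp ((0 : Fin (n - 1) → ℝ)) hDγ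
    simpa [Function.comp_def] using h1.comp_hasDerivAt 0 (hmv 0)
  -- derivative of the Neumann identity along the curve
  have hF : HasDerivAt (fun t : ℝ =>
      (∑ i : Fin (n - 1), fderiv ℝ u (t • v', γ (t • v'), y) (Pi.single i 1, 0, 0)
          * fderiv ℝ γ (t • v') (Pi.single i 1))
        - fderiv ℝ u (t • v', γ (t • v'), y) ((0 : Fin (n - 1) → ℝ), (1:ℝ), (0:ℝ)))
      ((∑ i : Fin (n - 1),
          (D (v', 0, 0) (Pi.single i 1, 0, 0) * fderiv ℝ γ ((0:ℝ) • v') (Pi.single i 1)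
            + fderiv ℝ u ((0:ℝ) • v', γ ((0:ℝ) • v'), y) (Pi.single i 1, 0, 0)
              * (Dγ v') (Pi.single i 1)))
        - D (v', 0, 0) ((0 : Fin (n - 1) → ℝ), (1:ℝ), (0:ℝ))) 0 :=
    (HasDerivAt.fun_sum (fun i _ => (ha _).fun_mul (hb _))).fun_sub (ha _)
  have hFzero : (∑ i : Fin (n - 1),
          (D (v', 0, 0) (Pi.single i 1, 0, 0) * fderiv ℝ γ ((0:ℝ) • v') (Pi.single i 1)
            + fderiv ℝ u ((0:ℝ) • v', γ ((0:ℝ) • v'), y) (Pi.single i 1, 0, 0)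
              * (Dγ v') (Pi.single i 1)))
        - D (v', 0, 0) ((0 : Fin (n - 1) → ℝ), (1:ℝ), (0:ℝ)) = 0 := by
    have hev : (fun _ : ℝ => (0:ℝ)) =ᶠ[nhds 0] (fun t : ℝ =>
        (∑ i : Fin (n - 1), fderiv ℝ u (t • v', γ (t • v'), y) (Pi.single i 1, 0, 0)
            * fderiv ℝ γ (t • v') (Pi.single i 1))
          - fderiv ℝ u (t • v', γ (t • v'), y) ((0 : Fin (n - 1) → ℝ), (1:ℝ), (0:ℝ))) := by
      filter_upwards [hSnhds] with t ht
      exact (hNeu (t • v') ht y hy).symm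
    have h0 := hF.congr_of_eventuallyEq hev
    exact h0.unique (hasDerivAt_const 0 0)
  have hDval : D (v', 0, 0) ((0 : Fin (n - 1) → ℝ), (1:ℝ), (0:ℝ)) = (Dγ v') v' := by
    have h2 : (∑ i : Fin (n - 1),
        (D (v', 0, 0) (Pi.single i 1, 0, 0) * fderiv ℝ γ ((0:ℝ) • v') (Pi.single i 1)
          + fderiv ℝ u ((0:ℝ) • v', γ ((0:ℝ) • v'), y) (Pi.single i 1, 0, 0)
            * (Dγ v') (Pi.single i 1)))
        = ∑ i : Fin (n - 1), v' i * (Dγ v') (Pi.single i 1) := by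
      refine Finset.sum_congr rfl fun i _ => ?_
      rw [zero_smul, hγ'0, hγ0]
      simp [hv']
    have h1 : (∑ i : Fin (n - 1), v' i * (Dγ v') (Pi.single i 1))
        - D (v', 0, 0) ((0 : Fin (n - 1) → ℝ), (1:ℝ), (0:ℝ)) = 0 := by
      rw [← h2]
      exact hFzero
    rw [aux_sum_single v' (Dγ v')] at h1
    linarith
  -- convexity gives nonnegativity of (Dγ v') v'
  have hgconv : ConvexOn ℝ S (fun t : ℝ => γ (t • v')) := by
    refine ⟨fun a ha' b hb' p q hp hq hpq => ?_, fun a ha' b hb' p q hp hq hpq => ?_⟩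
    · show (p • a + q • b) • v' ∈ U
      have := hγconv.1 ha' hb' hp hq hpq
      simpa [add_smul, smul_smul] using this
    · have := hγconv.2 ha' hb' hp hq hpq
      simpa [add_smul, smul_smul] using this
  have hgd : ∀ t ∈ S, HasDerivAt (fun s : ℝ => γ (s • v')) (fderiv ℝ γ (t • v') v') t := by
    intro t ht
    exact (((hγ.contDiffAt (hUopen.mem_nhds ht)).differentiableAt
      two_ne_zero).hasFDerivAt).comp_hasDerivAt t (hmv t)
  have hmono : MonotoneOn (deriv (fun s : ℝ => γ (s • v'))) S :=
    hgconv.monotoneOn_deriv (fun t ht => (hgd t ht).differentiableAt)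
  have hg2' : HasDerivAt (deriv (fun s : ℝ => γ (s • v'))) ((Dγ v') v') 0 := by
    refine (hb v').congr_of_eventuallyEq ?_
    filter_upwards [hSnhds] with t ht
    exact (hgd t ht).deriv
  have hfinal : 0 ≤ (Dγ v') v' := aux_mono_deriv_nonneg hSnhds hmono hg2'
  -- put everything together
  have hterm1 : (∑ i : Fin (n - 1),
      fderiv ℝ u ((0 : Fin (n - 1) → ℝ), (0:ℝ), y) (Pi.single i 1, 0, 0)
        * fderiv ℝ (fun p => fderiv ℝ u p (Pi.single i 1, 0, 0))
            ((0 : Fin (n - 1) → ℝ), (0:ℝ), y) ((0 : Fin (n - 1) → ℝ), (1:ℝ), (0:ℝ)))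
      = D (v', 0, 0) ((0 : Fin (n - 1) → ℝ), (1:ℝ), (0:ℝ)) := by
    have h2 : ∀ i : Fin (n - 1),
        fderiv ℝ (fun p => fderiv ℝ u p ((Pi.single i 1 : Fin (n - 1) → ℝ), (0:ℝ), (0:ℝ)))
            ((0 : Fin (n - 1) → ℝ), (0:ℝ), y) ((0 : Fin (n - 1) → ℝ), (1:ℝ), (0:ℝ))
          = (D.flip ((0 : Fin (n - 1) → ℝ), (1:ℝ), (0:ℝ))) ((Pi.single i 1 : Fin (n - 1) → ℝ), (0:ℝ), (0:ℝ)) := by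
      intro i
      rw [hkey, hsymm]
      rfl
    calc (∑ i : Fin (n - 1),
        fderiv ℝ u ((0 : Fin (n - 1) → ℝ), (0:ℝ), y) (Pi.single i 1, 0, 0)
          * fderiv ℝ (fun p => fderiv ℝ u p (Pi.single i 1, 0, 0))
              ((0 : Fin (n - 1) → ℝ), (0:ℝ), y) ((0 : Fin (n - 1) → ℝ), (1:ℝ), (0:ℝ)))
        = ∑ i : Fin (n - 1), v' i * (D.flip ((0 : Fin (n - 1) → ℝ), (1:ℝ), (0:ℝ))) (Pi.single i 1, 0, 0) := by
          refine Finset.sum_congr rfl fun i _ => ?_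
          rw [h2 i]
      _ = (D.flip ((0 : Fin (n - 1) → ℝ), (1:ℝ), (0:ℝ))) (v', 0, 0) :=
          aux_sum_single_prod v' _
      _ = D (v', 0, 0) ((0 : Fin (n - 1) → ℝ), (1:ℝ), (0:ℝ)) := rfl
  have hterm3 : fderiv ℝ (fun p => fderiv ℝ u p ((0 : Fin (n - 1) → ℝ), (0:ℝ), (1:ℝ)))
      ((0 : Fin (n - 1) → ℝ), (0:ℝ), y) ((0 : Fin (n - 1) → ℝ), (1:ℝ), (0:ℝ)) = 0 := by
    rw [hkey, hsymm]
    exact hB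
  rw [hterm1, hterm3, hA y hy]
  rw [hDval]
  simpa using hfinal
end
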